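/- If in addition every coupling constant t_k is a nonnegative real number, then the ℂSG measure μ_v associated to t is of bounded variation. -/

import Mathlib

open MeasureTheory Filter Finset

attribute [local instance] Classical.propDecidable

noncomputable section

/-- A relation on ℕ representing a naturally labelled past-finite causal set:
a strict partial order `r` with `r i j → i < j`. -/
def CausalRel (r : ℕ → ℕ → Prop) : Prop :=
  (∀ i, ¬ r i i) ∧ (∀ i j k, r i j → r j k → r i k) ∧ (∀ i j, r i j → i < j)

/-- Ω, the sample space of naturally labelled past-finite causal sets. -/
def Omega : Type := {r : ℕ → ℕ → Prop // CausalRel r}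

/-- An `n`-node: a strict partial order on `Fin n` compatible with the labelling. -/
def IsNode {n : ℕ} (p : Fin n → Fin n → Prop) : Prop :=
  (∀ i, ¬ p i i) ∧ (∀ i j k, p i j → p j k → p i k) ∧
    (∀ i j : Fin n, p i j → (i : ℕ) < (j : ℕ))

/-- The cylinder set of an `n`-node. -/
def Cyl {n : ℕ} (p : Fin n → Fin n → Prop) : Set Omega :=
  {r | ∀ i j : Fin n, r.1 i.1 j.1 ↔ p i j}

/-- The Boolean set algebra 𝔜 generated by the cylinder sets (and Ω itself) under
finite unions, intersections and complements. -/
inductive InAlg : Set Omega → Prop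
  | basic {n : ℕ} (hn : 1 ≤ n) (p : Fin n → Fin n → Prop) (hp : IsNode p) : InAlg (Cyl p)
  | univ : InAlg Set.univ
  | compl (s : Set Omega) : InAlg s → InAlg sᶜ
  | union (s t : Set Omega) : InAlg s → InAlg t → InAlg (s ∪ t)

/-- Finite additivity of a complex set function on the algebra 𝔜. -/
def FinitelyAdditive (μ : Set Omega → ℂ) : Prop :=
  ∀ s t : Set Omega, InAlg s → InAlg t → Disjoint s t → μ (s ∪ t) = μ s + μ t

/-- A finite partition of Ω into pairwise disjoint members of 𝔜. -/
def IsPartition (π : Finset (Set Omega)) : Prop :=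
  (∀ s ∈ π, InAlg s) ∧ ((↑π : Set (Set Omega)).Pairwise Disjoint) ∧
    ⋃₀ (↑π : Set (Set Omega)) = Set.univ

/-- Bounded variation: the sums Σᵢ |μ(αᵢ)| over finite partitions of Ω into members
of 𝔜 are uniformly bounded. -/
def BoundedVariation (μ : Set Omega → ℂ) : Prop :=
  ∃ M : ℝ, ∀ π : Finset (Set Omega), IsPartition π → ∑ s ∈ π, ‖μ s‖ ≤ M

/-- λ(a,b) = Σ_{k=b}^{a} C(a−b, k−b)·t_k. -/
def lam (t : ℕ → ℂ) (a b : ℕ) : ℂ :=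
  ∑ k ∈ Finset.Icc b a, ((a - b).choose (k - b) : ℂ) * t k

/-- The maximal elements of a finite subset `I` with respect to the relation `c`. -/
def maxIn {n : ℕ} (c : Fin n → Fin n → Prop) (I : Finset (Fin n)) : Finset (Fin n) :=
  I.filter fun i => ∀ j ∈ I, ¬ c i j

/-- The past of the element `m` in the node `p`. -/
def pastOf {n : ℕ} (p : Fin n → Fin n → Prop) (m : Fin n) : Finset (Fin n) :=
  Finset.univ.filter fun i => p i m

/-- The ℂSG amplitude of (the cylinder set of) an `n`-node:
∏_{m=1}^{n−1} λ(ϖ_m, μ_m)/λ(m,0). -/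
def amp (t : ℕ → ℂ) {n : ℕ} (p : Fin n → Fin n → Prop) : ℂ :=
  ∏ m ∈ Finset.univ.filter (fun m : Fin n => 1 ≤ (m : ℕ)),
    lam t (pastOf p m).card (maxIn p (pastOf p m)).card / lam t (m : ℕ) 0

/-- μ is the ℂSG measure associated to the coupling constants t: it is finitely
additive on 𝔜 and takes the prescribed values on cylinder sets. -/
def IsCSG (t : ℕ → ℂ) (μ : Set Omega → ℂ) : Prop :=
  FinitelyAdditive μ ∧
    ∀ (n : ℕ), 1 ≤ n → ∀ p : Fin n → Fin n → Prop, IsNode p → μ (Cyl p) = amp t p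

/-- `I` is an order ideal (downward-closed set) of the relation `c`. -/
def isIdeal {n : ℕ} (c : Fin n → Fin n → Prop) (I : Finset (Fin n)) : Prop :=
  ∀ j ∈ I, ∀ i, c i j → i ∈ I

/-- Q(c) := Σ_{I an order ideal of c} |λ(|I|, m(I))|. -/
def Qval (t : ℕ → ℂ) {n : ℕ} (c : Fin n → Fin n → Prop) : ℝ :=
  ∑ I ∈ Finset.univ.filter (fun I : Finset (Fin n) => isIdeal c I),
    ‖lam t I.card (maxIn c I).card‖

/-- ζ(c) := Q(c)/|λ(n,0)| − 1. -/
def zeta (t : ℕ → ℂ) {n : ℕ} (c : Fin n → Fin n → Prop) : ℝ :=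
  Qval t c / ‖lam t n 0‖ - 1

/-- ζ_n^a := (Σ_{k=0}^{n} C(n,k)·|t_k|)/|λ(n,0)| − 1. -/
def zetaA (t : ℕ → ℂ) (n : ℕ) : ℝ :=
  (∑ k ∈ Finset.range (n + 1), (n.choose k : ℝ) * ‖t k‖) /
    ‖lam t n 0‖ - 1

/-- ζ_n^c := (|t_0| + Σ_{ϖ=1}^{n} |λ(ϖ,1)|)/|λ(n,0)| − 1. -/
def zetaC (t : ℕ → ℂ) (n : ℕ) : ℝ :=
  (‖t 0‖ + ∑ w ∈ Finset.Icc 1 n, ‖lam t w 1‖) /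
    ‖lam t n 0‖ - 1

/-- S_n := Σ_{p an n-node} |μ(Cyl(p))|. -/
def Svar (μ : Set Omega → ℂ) (n : ℕ) : ℝ :=
  ∑ p : {p : Fin n → Fin n → Prop // IsNode p}, ‖μ (Cyl p.1)‖


section Aux9

/-- Nodes of level `N` as a subtype. -/
abbrev NodeT9 (N : ℕ) := {p : Fin N → Fin N → Prop // IsNode p}

/-- The level-`N` node determined by a causal set. -/
def nodeOf9 (r : Omega) (N : ℕ) : NodeT9 N :=
  ⟨fun i j => r.1 i.1 j.1,
    fun i => r.2.1 i.1,
    fun i j k hij hjk => r.2.2.1 _ _ _ hij hjk,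
    fun i j h => r.2.2.2 _ _ h⟩

lemma mem_Cyl_nodeOf9 (r : Omega) (N : ℕ) : r ∈ Cyl (nodeOf9 r N).1 :=
  fun _ _ => Iff.rfl

lemma eq_nodeOf9_of_mem {N : ℕ} {q : NodeT9 N} {r : Omega} (h : r ∈ Cyl q.1) :
    q = nodeOf9 r N :=
  Subtype.ext (funext fun i => funext fun j => propext ((h i j).symm))

lemma Cyl_disjoint9 {N : ℕ} {q q' : NodeT9 N} (h : q ≠ q') :
    Disjoint (Cyl q.1) (Cyl q'.1) :=
  Set.disjoint_left.2 fun _ hq hq' =>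
    h ((eq_nodeOf9_of_mem hq).trans (eq_nodeOf9_of_mem hq').symm)

/-- Restriction of a node to a lower level. -/
def res9 {n N : ℕ} (hn : n ≤ N) (q : NodeT9 N) : NodeT9 n :=
  ⟨fun i j => q.1 (Fin.castLE hn i) (Fin.castLE hn j),
    fun i => q.2.1 _,
    fun i j k hij hjk => q.2.2.1 _ _ _ hij hjk,
    fun i j h => q.2.2.2 _ _ h⟩

lemma mem_Cyl_res9 {n N : ℕ} (hn : n ≤ N) {q : NodeT9 N} {r : Omega}
    (h : r ∈ Cyl q.1) : r ∈ Cyl (res9 hn q).1 :=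
  fun i j => h (Fin.castLE hn i) (Fin.castLE hn j)

lemma res9_nodeOf9 {n N : ℕ} (hn : n ≤ N) (r : Omega) :
    res9 hn (nodeOf9 r N) = nodeOf9 r n := rfl

lemma iUnion_lift9 {n N : ℕ} (hn : n ≤ N) (S : Finset (NodeT9 n)) :
    (⋃ q ∈ S, Cyl q.1) =
      ⋃ q ∈ Finset.univ.filter (fun q' : NodeT9 N => res9 hn q' ∈ S), Cyl q.1 := by
  ext r
  simp only [Set.mem_iUnion, Finset.mem_filter, Finset.mem_univ, true_and, exists_prop]
  constructor
  · rintro ⟨q, hqS, hq⟩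
    refine ⟨nodeOf9 r N, ?_, mem_Cyl_nodeOf9 r N⟩
    rw [res9_nodeOf9, ← eq_nodeOf9_of_mem hq]; exact hqS
  · rintro ⟨q, hqS, hq⟩
    exact ⟨res9 hn q, hqS, mem_Cyl_res9 hn hq⟩

lemma rep_of_inAlg9 {s : Set Omega} (h : InAlg s) :
    ∃ N : ℕ, 1 ≤ N ∧ ∃ S : Finset (NodeT9 N), s = ⋃ q ∈ S, Cyl q.1 := by
  induction h with
  | @basic n hn p hp =>
      exact ⟨n, hn, {⟨p, hp⟩}, by simp⟩
  | univ =>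
      refine ⟨1, le_refl 1, Finset.univ, ?_⟩
      ext r
      simp only [Set.mem_univ, true_iff, Set.mem_iUnion, Finset.mem_univ, exists_prop,
        true_and]
      exact ⟨nodeOf9 r 1, mem_Cyl_nodeOf9 r 1⟩
  | compl s hs ih =>
      obtain ⟨N, hN, S, rfl⟩ := ih
      refine ⟨N, hN, Finset.univ \ S, ?_⟩
      ext r
      simp only [Set.mem_compl_iff, Set.mem_iUnion, Finset.mem_sdiff, Finset.mem_univ,
        true_and, exists_prop]
      constructor
      · intro h
        refine ⟨nodeOf9 r N, fun hin => h ⟨nodeOf9 r N, hin, mem_Cyl_nodeOf9 r N⟩,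
          mem_Cyl_nodeOf9 r N⟩
      · rintro ⟨q, hqS, hq⟩ ⟨q', hq'S, hq'⟩
        exact hqS (((eq_nodeOf9_of_mem hq).trans (eq_nodeOf9_of_mem hq').symm) ▸ hq'S)
  | union s t hs ht ihs iht =>
      obtain ⟨N1, hN1, S1, rfl⟩ := ihs
      obtain ⟨N2, hN2, S2, rfl⟩ := iht
      refine ⟨max N1 N2, le_trans hN1 (le_max_left _ _),
        (Finset.univ.filter (fun q' : NodeT9 (max N1 N2) => res9 (le_max_left N1 N2) q' ∈ S1)) ∪
        (Finset.univ.filter (fun q' : NodeT9 (max N1 N2) => res9 (le_max_right N1 N2) q' ∈ S2)),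
        ?_⟩
      rw [iUnion_lift9 (le_max_left N1 N2) S1, iUnion_lift9 (le_max_right N1 N2) S2]
      ext r
      simp only [Set.mem_union, Set.mem_iUnion, Finset.mem_union, exists_prop]
      constructor
      · rintro (⟨q, hq1, hq2⟩ | ⟨q, hq1, hq2⟩)
        · exact ⟨q, Or.inl hq1, hq2⟩
        · exact ⟨q, Or.inr hq1, hq2⟩
      · rintro ⟨q, (hq1 | hq1), hq2⟩
        · exact Or.inl ⟨q, hq1, hq2⟩
        · exact Or.inr ⟨q, hq1, hq2⟩

lemma inAlg_empty9 : InAlg (∅ : Set Omega) := by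
  simpa using InAlg.compl _ InAlg.univ

lemma mu_empty9 {μ : Set Omega → ℂ} (hadd : FinitelyAdditive μ) : μ ∅ = 0 := by
  have h := hadd ∅ ∅ inAlg_empty9 inAlg_empty9 (disjoint_bot_left)
  simp only [Set.union_empty] at h
  linear_combination -h

lemma mu_biUnion9 {μ : Set Omega → ℂ} (hadd : FinitelyAdditive μ) {N : ℕ} (hN : 1 ≤ N)
    (S : Finset (NodeT9 N)) :
    InAlg (⋃ q ∈ S, Cyl q.1) ∧ μ (⋃ q ∈ S, Cyl q.1) = ∑ q ∈ S, μ (Cyl q.1) := by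
  classical
  induction S using Finset.induction with
  | empty => simp [mu_empty9 hadd, inAlg_empty9]
  | @insert a S ha ih =>
      rw [Finset.set_biUnion_insert, Finset.sum_insert ha]
      have hdisj : Disjoint (Cyl a.1) (⋃ q ∈ S, Cyl q.1) := by
        rw [Set.disjoint_iUnion_right]
        intro q
        rw [Set.disjoint_iUnion_right]
        intro hq
        exact Cyl_disjoint9 (fun h => ha (h ▸ hq))
      have hCyl : InAlg (Cyl a.1) := InAlg.basic hN a.1 a.2
      exact ⟨InAlg.union _ _ hCyl ih.1,
        by rw [hadd _ _ hCyl ih.1 hdisj, ih.2]⟩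

lemma mu_sUnion9 {μ : Set Omega → ℂ} (hadd : FinitelyAdditive μ)
    (π : Finset (Set Omega)) (h1 : ∀ s ∈ π, InAlg s)
    (h2 : ((↑π : Set (Set Omega))).Pairwise Disjoint) :
    μ (⋃₀ (↑π : Set (Set Omega))) = ∑ s ∈ π, μ s ∧ InAlg (⋃₀ (↑π : Set (Set Omega))) := by
  classical
  induction π using Finset.induction with
  | empty => simp [mu_empty9 hadd, inAlg_empty9]
  | @insert a π ha ih =>
      have h1' : ∀ s ∈ π, InAlg s := fun s hs => h1 s (Finset.mem_insert_of_mem hs)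
      have h2' : ((↑π : Set (Set Omega))).Pairwise Disjoint :=
        h2.mono (by simp [Set.subset_insert])
      obtain ⟨ihμ, ihA⟩ := ih h1' h2'
      rw [Finset.coe_insert, Set.sUnion_insert, Finset.sum_insert ha]
      have hdisj : Disjoint a (⋃₀ (↑π : Set (Set Omega))) := by
        rw [Set.disjoint_sUnion_right]
        intro s hs
        exact h2 (by simp) (by simp [hs]) (fun h => ha (by rw [h]; exact hs))
      have hAa : InAlg a := h1 a (Finset.mem_insert_self a π)
      exact ⟨by rw [hadd _ _ hAa ihA hdisj, ihμ], InAlg.union _ _ hAa ihA⟩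

/-- z is a nonnegative real. -/
def IsNN9 (z : ℂ) : Prop := ∃ x : ℝ, 0 ≤ x ∧ z = (x : ℂ)

lemma isNN9_mul {a b : ℂ} (ha : IsNN9 a) (hb : IsNN9 b) : IsNN9 (a * b) := by
  obtain ⟨x, hx, rfl⟩ := ha; obtain ⟨y, hy, rfl⟩ := hb
  exact ⟨x * y, mul_nonneg hx hy, by push_cast; ring⟩

lemma isNN9_one : IsNN9 (1 : ℂ) := ⟨1, zero_le_one, by norm_num⟩

lemma isNN9_zero : IsNN9 (0 : ℂ) := ⟨0, le_refl 0, by norm_num⟩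

lemma isNN9_add {a b : ℂ} (ha : IsNN9 a) (hb : IsNN9 b) : IsNN9 (a + b) := by
  obtain ⟨x, hx, rfl⟩ := ha; obtain ⟨y, hy, rfl⟩ := hb
  exact ⟨x + y, add_nonneg hx hy, by push_cast; ring⟩

lemma isNN9_div {a b : ℂ} (ha : IsNN9 a) (hb : IsNN9 b) : IsNN9 (a / b) := by
  obtain ⟨x, hx, rfl⟩ := ha; obtain ⟨y, hy, rfl⟩ := hb
  refine ⟨x / y, div_nonneg hx hy, ?_⟩
  rw [Complex.ofReal_div]

lemma lam_isNN9 {t : ℕ → ℂ} (hreal : ∀ k : ℕ, ∃ s : ℝ, 0 ≤ s ∧ t k = (s : ℂ))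
    (a b : ℕ) : IsNN9 (lam t a b) := by
  choose s hs0 hst using hreal
  refine ⟨∑ k ∈ Finset.Icc b a, ((a - b).choose (k - b) : ℝ) * s k,
    Finset.sum_nonneg fun k _ => mul_nonneg (by positivity) (hs0 k), ?_⟩
  rw [lam]
  push_cast
  exact Finset.sum_congr rfl fun k _ => by rw [hst k]

lemma amp_isNN9 {t : ℕ → ℂ} (hreal : ∀ k : ℕ, ∃ s : ℝ, 0 ≤ s ∧ t k = (s : ℂ))
    {n : ℕ} (p : Fin n → Fin n → Prop) : IsNN9 (amp t p) := by
  refine Finset.prod_induction _ IsNN9 (fun a b => isNN9_mul) isNN9_one ?_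
  intro m _
  exact isNN9_div (lam_isNN9 hreal _ _) (lam_isNN9 hreal _ _)

lemma mu_isNN9 {t : ℕ → ℂ} (hreal : ∀ k : ℕ, ∃ s : ℝ, 0 ≤ s ∧ t k = (s : ℂ))
    {μ : Set Omega → ℂ} (hμ : IsCSG t μ) {s : Set Omega} (hs : InAlg s) :
    IsNN9 (μ s) := by
  obtain ⟨N, hN, S, rfl⟩ := rep_of_inAlg9 hs
  rw [(mu_biUnion9 hμ.1 hN S).2]
  refine Finset.sum_induction _ IsNN9 (fun a b => isNN9_add) isNN9_zero ?_
  intro q _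
  rw [hμ.2 N hN q.1 q.2]
  exact amp_isNN9 hreal q.1

/-- The trivial node of level 1. -/
def pOne9 : Fin 1 → Fin 1 → Prop := fun _ _ => False

lemma pOne9_node : IsNode pOne9 :=
  ⟨fun _ h => h, fun _ _ _ h => h.elim, fun _ _ h => h.elim⟩

lemma Cyl_pOne9 : Cyl pOne9 = Set.univ := by
  ext r
  simp only [Set.mem_univ, iff_true, Cyl, Set.mem_setOf_eq, pOne9, iff_false]
  intro i j h
  have := r.2.2.2 _ _ h
  omega

lemma mu_univ9 {t : ℕ → ℂ} {μ : Set Omega → ℂ} (hμ : IsCSG t μ) :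
    μ Set.univ = 1 := by
  rw [← Cyl_pOne9, hμ.2 1 le_rfl pOne9 pOne9_node]
  rw [amp]
  rw [Finset.prod_eq_one]
  intro m hm
  simp only [Finset.mem_filter, Finset.mem_univ, true_and] at hm
  omega

end Aux9

/-- if every coupling constant t_k is a nonnegative real number, then the
ℂSG measure μ_v associated to t is of bounded variation. -/
theorem statement_9 (t : ℕ → ℂ) (ht0 : t 0 = 1) (hlam : ∀ m : ℕ, lam t m 0 ≠ 0)
    (hreal : ∀ k : ℕ, ∃ s : ℝ, 0 ≤ s ∧ t k = (s : ℂ))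
    (μ : Set Omega → ℂ) (hμ : IsCSG t μ) :
    BoundedVariation μ := by
  refine ⟨1, fun π hπ => ?_⟩
  obtain ⟨h1, h2, h3⟩ := hπ
  have hsum := mu_sUnion9 hμ.1 π h1 h2
  rw [h3, mu_univ9 hμ] at hsum
  have habs : ∀ s ∈ π, ‖μ s‖ = (μ s).re := by
    intro s hs
    obtain ⟨x, hx0, hxe⟩ := mu_isNN9 hreal hμ (h1 s hs)
    rw [hxe]
    simp [Complex.norm_real, abs_of_nonneg hx0]
  calc ∑ s ∈ π, ‖μ s‖ = ∑ s ∈ π, (μ s).re := Finset.sum_congr rfl habs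
    _ = (∑ s ∈ π, μ s).re := (Complex.re_sum π μ).symm
    _ = (1 : ℂ).re := by rw [← hsum.1]
    _ ≤ 1 := by norm_num


end
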